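/- Let p be an odd prime and let π_0 = (p-1)/2. Then for every integer t with 0 ≤ t ≤ p-1, 2^{2t} · (-1)^t · C(π_0, t) ≡ C(2t, t) (mod p). -/
import Mathlib

lemma fac_two_mul (t : ℕ) :
    Nat.factorial (2 * t) =
      2 ^ t * Nat.factorial t * ∏ i ∈ Finset.range t, (2 * i + 1) := by
  induction t with
  | zero => simp
  | succ n ih =>
    have h : 2 * (n + 1) = (2 * n + 1) + 1 := by ring
    rw [h, Nat.factorial_succ, Nat.factorial_succ, ih, Finset.prod_range_succ,
      Nat.factorial_succ]
    ring

/-- Let `p` be an odd prime and `π₀ = (p-1)/2`. Then for every `0 ≤ t ≤ p-1`,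
`2^{2t} · (-1)^t · C(π₀, t) ≡ C(2t, t) (mod p)`. -/
theorem pow_mul_neg_one_pow_choose_modEq (p : ℕ) (hp : p.Prime) (hodd : Odd p)
    (t : ℕ) (ht : t ≤ p - 1) :
    (2 ^ (2 * t) * (-1) ^ t * (Nat.choose ((p - 1) / 2) t : ℤ)) ≡
      (Nat.choose (2 * t) t : ℤ) [ZMOD p] := by
  haveI : Fact p.Prime := ⟨hp⟩
  set π : ℕ := (p - 1) / 2 with hπ
  have hp1 : 1 ≤ p := hp.one_lt.le
  have htp : t < p := lt_of_le_of_lt ht (Nat.sub_lt hp.pos one_pos)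
  have h2π : 2 * π = p - 1 := by
    rw [hπ, Nat.mul_div_cancel' ]
    obtain ⟨k, hk⟩ := hodd
    omega
  refine (ZMod.intCast_eq_intCast_iff _ _ _).mp ?_
  push_cast
  -- now goal in ZMod p
  rcases le_or_gt t π with hle | hlt
  · -- main case
    have ht0 : (Nat.factorial t : ZMod p) ≠ 0 := by
      simpa [ZMod.natCast_eq_zero_iff, hp.dvd_factorial] using htp.not_ge
    have key : (2 : ZMod p) ^ (2 * t) * (-1) ^ t * (Nat.choose π t : ZMod p) *
        (Nat.factorial t) * (Nat.factorial t) =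
        (Nat.choose (2 * t) t : ZMod p) * (Nat.factorial t) * (Nat.factorial t) := by
      have hrhs : (Nat.choose (2 * t) t : ZMod p) * (Nat.factorial t) * (Nat.factorial t)
          = (Nat.factorial (2 * t) : ZMod p) := by
        have := Nat.choose_mul_factorial_mul_factorial (Nat.le_mul_of_pos_left t two_pos)
        rw [show 2 * t - t = t by omega] at this
        exact_mod_cast congrArg (Nat.cast : ℕ → ZMod p) this
      have hdesc : (Nat.choose π t : ZMod p) * (Nat.factorial t)
          = (Nat.descFactorial π t : ZMod p) := by
        rw [Nat.descFactorial_eq_factorial_mul_choose]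
        push_cast; ring
      have hprod : (Nat.descFactorial π t : ZMod p)
          = ∏ i ∈ Finset.range t, ((π : ZMod p) - i) := by
        rw [Nat.descFactorial_eq_prod_range]
        push_cast [Finset.prod_congr]
        refine Finset.prod_congr rfl fun i hi => ?_
        have : i ≤ π := le_trans (Finset.mem_range.mp hi).le hle
        rw [Nat.cast_sub this]
      have h2 : (2 : ZMod p) * (π : ZMod p) = -1 := by
        have : ((2 * π : ℕ) : ZMod p) = ((p - 1 : ℕ) : ZMod p) := by rw [h2π]
        push_cast at this
        rw [this, Nat.cast_sub hp1]
        simp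
      have hhalf : (2 : ZMod p) ^ t * ∏ i ∈ Finset.range t, ((π : ZMod p) - i)
          = (-1) ^ t * ∏ i ∈ Finset.range t, ((2 * i + 1 : ℕ) : ZMod p) := by
        calc (2 : ZMod p) ^ t * ∏ i ∈ Finset.range t, ((π : ZMod p) - i)
            = ∏ i ∈ Finset.range t, (2 * ((π : ZMod p) - i)) := by
              rw [Finset.prod_mul_distrib, Finset.prod_const, Finset.card_range]
          _ = ∏ i ∈ Finset.range t, ((-1) * ((2 * i + 1 : ℕ) : ZMod p)) :=
              Finset.prod_congr rfl fun i _ => by push_cast; rw [mul_sub, h2]; ring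
          _ = (-1) ^ t * ∏ i ∈ Finset.range t, ((2 * i + 1 : ℕ) : ZMod p) := by
              rw [Finset.prod_mul_distrib, Finset.prod_const, Finset.card_range]
      have hfac : (Nat.factorial (2 * t) : ZMod p)
          = 2 ^ t * (Nat.factorial t : ZMod p) * ∏ i ∈ Finset.range t, ((2 * i + 1 : ℕ) : ZMod p) := by
        rw [fac_two_mul]
        push_cast
        ring
      have hneg : ((-1 : ZMod p)) ^ t * (-1) ^ t = 1 := by
        rw [← mul_pow]; simp
      calc (2 : ZMod p) ^ (2 * t) * (-1) ^ t * (Nat.choose π t : ZMod p) *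
            (Nat.factorial t) * (Nat.factorial t)
          = 2 ^ t * (-1) ^ t * (Nat.factorial t) *
            (2 ^ t * ((Nat.choose π t : ZMod p) * (Nat.factorial t))) := by
            rw [two_mul, pow_add]; ring
        _ = 2 ^ t * (-1) ^ t * (Nat.factorial t) *
            ((-1) ^ t * ∏ i ∈ Finset.range t, ((2 * i + 1 : ℕ) : ZMod p)) := by
            rw [hdesc, hprod, hhalf]
        _ = ((-1 : ZMod p)) ^ t * (-1) ^ t *
            (2 ^ t * (Nat.factorial t) * ∏ i ∈ Finset.range t, ((2 * i + 1 : ℕ) : ZMod p)) := by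
            ring
        _ = (Nat.factorial (2 * t) : ZMod p) := by rw [hneg, one_mul, ← hfac]
        _ = (Nat.choose (2 * t) t : ZMod p) * (Nat.factorial t) * (Nat.factorial t) := hrhs.symm
    exact mul_right_cancel₀ ht0 (mul_right_cancel₀ ht0 key)
  · -- t > π : both sides vanish
    have hc : Nat.choose π t = 0 := Nat.choose_eq_zero_of_lt hlt
    have hdvd : p ∣ Nat.choose (2 * t) t := by
      refine hp.dvd_choose htp (by omega) (by omega)
    rw [hc]
    have : (Nat.choose (2 * t) t : ZMod p) = 0 := by
      rwa [ZMod.natCast_eq_zero_iff]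
    rw [this]
    simp
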